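/- A bipartite matrix X in M_d(C) ⊗ M_d(C) satisfying (O⊗O)X(O⊗O) = X for all diagonal orthogonal (sign) matrices O can be written as X = Σ_{i,j} A_{ij} |ij⟩⟨ij| + Σ_{i≠j} B_{ij} |ii⟩⟨jj| + Σ_{i≠j} C_{ij} |ij⟩⟨ji| for complex matrices A, B, C with diag(A) = diag(B) = diag(C). Consequently, the complex dimension of the subspace of such matrices is 3d² − 2d. -/

import Mathlib

open Matrix

/-- The LDOI matrix `X^{(3)}_{(A,B,C)} = Σ_{i,j} A_{ij}|ij⟩⟨ij| + Σ_{i≠j} B_{ij}|ii⟩⟨jj|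
  + Σ_{i≠j} C_{ij}|ij⟩⟨ji|`. -/
def X3 {d : ℕ} {R : Type*} [CommRing R] (A B C : Matrix (Fin d) (Fin d) R) :
    Matrix (Fin d × Fin d) (Fin d × Fin d) R :=
  Matrix.of fun p q =>
    (if p.1 = q.1 ∧ p.2 = q.2 then A p.1 p.2 else 0) +
    (if p.1 = p.2 ∧ q.1 = q.2 ∧ p.1 ≠ q.1 then B p.1 q.1 else 0) +
    (if p.1 = q.2 ∧ p.2 = q.1 ∧ p.1 ≠ p.2 then C p.1 p.2 else 0)

/-- The realignment `(X^R)_{ij,kl} = X_{ik,jl}`. -/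
def realign {d : ℕ} {R : Type*} [CommRing R]
    (X : Matrix (Fin d × Fin d) (Fin d × Fin d) R) :
    Matrix (Fin d × Fin d) (Fin d × Fin d) R :=
  Matrix.of fun p q => X (p.1, q.1) (p.2, q.2)

/-- The partial transpose `(X^Γ)_{ij,kl} = X_{il,kj}`. -/
def ptrans {d : ℕ} {R : Type*} [CommRing R]
    (X : Matrix (Fin d × Fin d) (Fin d × Fin d) R) :
    Matrix (Fin d × Fin d) (Fin d × Fin d) R :=
  Matrix.of fun p q => X (p.1, q.2) (q.1, p.2)

/-- The triple (A,B,C) has equal diagonals. -/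
def EqDiag {d : ℕ} {R : Type*} [CommRing R] (A B C : Matrix (Fin d) (Fin d) R) : Prop :=
  ∀ i, A i i = B i i ∧ B i i = C i i

section Aux
variable {d : ℕ}

/-- The support condition: entry ((i,j),(k,l)) is allowed iff {i,j} = {k,l} as multisets. -/
def LCond (p q : Fin d × Fin d) : Prop :=
  (p.1 = q.1 ∧ p.2 = q.2) ∨ (p.1 = p.2 ∧ q.1 = q.2) ∨ (p.1 = q.2 ∧ p.2 = q.1)

instance (p q : Fin d × Fin d) : Decidable (LCond p q) := by unfold LCond; infer_instance

lemma exists_sign {i j k l : Fin d} (h : ¬ LCond (i,j) (k,l)) :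
    ∃ s : Fin d → ℂ, (∀ x, s x = 1 ∨ s x = -1) ∧ (s i * s j) * (s k * s l) = -1 := by
  simp only [LCond, not_or, not_and] at h
  obtain ⟨h1, h2, h3⟩ := h
  have h1' : i = k → ¬ j = l := h1
  have h2' : i = j → ¬ k = l := h2
  have h3' : i = l → ¬ j = k := h3
  have key : ∃ a : Fin d,
      (i = a ∧ j ≠ a ∧ k ≠ a ∧ l ≠ a) ∨ (i ≠ a ∧ j = a ∧ k ≠ a ∧ l ≠ a) ∨
      (i ≠ a ∧ j ≠ a ∧ k = a ∧ l ≠ a) ∨ (i ≠ a ∧ j ≠ a ∧ k ≠ a ∧ l = a) := by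
    by_cases hij : i = j
    · by_cases hik : i = k
      · refine ⟨l, Or.inr (Or.inr (Or.inr ⟨?_, ?_, ?_, rfl⟩))⟩
        · exact fun hh => h2' hij (hik.symm.trans hh)
        · rw [← hij, hik]; exact h2' hij
        · exact h2' hij
      · refine ⟨k, Or.inr (Or.inr (Or.inl ⟨hik, ?_, rfl, ?_⟩))⟩
        · rw [← hij]; exact hik
        · exact fun hh => h2' hij hh.symm
    · by_cases hik : i = k
      · refine ⟨j, Or.inr (Or.inl ⟨fun hh => hij hh, rfl, ?_, ?_⟩)⟩
        · rw [← hik]; exact fun hh => hij hh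
        · exact fun hh => h1' hik hh.symm
      · by_cases hil : i = l
        · refine ⟨j, Or.inr (Or.inl ⟨fun hh => hij hh, rfl, ?_, ?_⟩)⟩
          · exact fun hh => h3' hil hh.symm
          · rw [← hil]; exact fun hh => hij hh
        · exact ⟨i, Or.inl ⟨rfl, fun hh => hij hh.symm, fun hh => hik hh.symm,
            fun hh => hil hh.symm⟩⟩
  obtain ⟨a, ha⟩ := key
  refine ⟨fun x => if x = a then -1 else 1, fun x => by by_cases h : x = a <;> simp [h], ?_⟩
  rcases ha with ⟨e1,e2,e3,e4⟩|⟨e1,e2,e3,e4⟩|⟨e1,e2,e3,e4⟩|⟨e1,e2,e3,e4⟩ <;>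
    simp [e1, e2, e3, e4]

lemma supp_of_inv {X : Matrix (Fin d × Fin d) (Fin d × Fin d) ℂ}
    (hX : ∀ s : Fin d → ℂ, (∀ i, s i = 1 ∨ s i = -1) →
      Matrix.diagonal (fun p : Fin d × Fin d => s p.1 * s p.2) * X *
        Matrix.diagonal (fun p : Fin d × Fin d => s p.1 * s p.2) = X)
    {p q : Fin d × Fin d} (h : ¬ LCond p q) : X p q = 0 := by
  obtain ⟨i, j⟩ := p; obtain ⟨k, l⟩ := q
  obtain ⟨s, hs, hprod⟩ := exists_sign h
  have hE := congrArg (fun M => M (i,j) (k,l)) (hX s hs)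
  simp only [Matrix.mul_diagonal, Matrix.diagonal_mul] at hE
  have h2 : (2:ℂ) * X (i,j) (k,l) = 0 := by
    linear_combination X (i,j) (k,l) * hprod - hE
  exact (mul_eq_zero.mp h2).resolve_left two_ne_zero

lemma X3_of_supp {X : Matrix (Fin d × Fin d) (Fin d × Fin d) ℂ}
    (h : ∀ p q, ¬ LCond p q → X p q = 0) :
    ∃ A B C : Matrix (Fin d) (Fin d) ℂ, EqDiag A B C ∧ X = X3 A B C := by
  refine ⟨Matrix.of fun i j => X (i,j) (i,j),
    Matrix.of fun i k => if i = k then X (i,i) (i,i) else X (i,i) (k,k),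
    Matrix.of fun i j => if i = j then X (i,i) (i,i) else X (i,j) (j,i),
    fun i => by simp, ?_⟩
  ext ⟨i, j⟩ ⟨k, l⟩
  show X (i,j) (k,l) = _
  by_cases hc : LCond (i,j) (k,l)
  · rcases hc with ⟨h1, h2⟩ | ⟨h1, h2⟩ | ⟨h1, h2⟩
    · have h1' : i = k := h1
      have h2' : j = l := h2
      subst h1'; subst h2'
      by_cases hij : i = j <;> simp [X3, hij]
    · have h1' : i = j := h1
      have h2' : k = l := h2
      subst h1'; subst h2'
      by_cases hik : i = k <;> simp [X3, hik]
    · have h1' : i = l := h1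
      have h2' : j = k := h2
      subst h1'; subst h2'
      by_cases hij : i = j <;> simp [X3, hij]
  · rw [h _ _ hc]
    simp only [X3, Matrix.of_apply]
    rw [if_neg (fun hh => hc (Or.inl hh)),
      if_neg (fun hh => hc (Or.inr (Or.inl ⟨hh.1, hh.2.1⟩))),
      if_neg (fun hh => hc (Or.inr (Or.inr ⟨hh.1, hh.2.1⟩)))]
    ring

end Aux

section Dim
variable {d : ℕ}

noncomputable def suppSub (d : ℕ) : Submodule ℂ (Matrix (Fin d × Fin d) (Fin d × Fin d) ℂ) where
  carrier := {X | ∀ p q, ¬ LCond p q → X p q = 0}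
  add_mem' := fun ha hb p q h => by
    simp only [Matrix.add_apply, ha p q h, hb p q h, add_zero]
  zero_mem' := fun p q h => rfl
  smul_mem' := fun c X hX p q h => by
    simp only [Matrix.smul_apply, hX p q h, smul_zero]

lemma mem_suppSub_of_inv {X : Matrix (Fin d × Fin d) (Fin d × Fin d) ℂ}
    (hX : ∀ s : Fin d → ℂ, (∀ i, s i = 1 ∨ s i = -1) →
      Matrix.diagonal (fun p : Fin d × Fin d => s p.1 * s p.2) * X *
        Matrix.diagonal (fun p : Fin d × Fin d => s p.1 * s p.2) = X) :
    X ∈ suppSub d := fun p q h => supp_of_inv hX h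

lemma inv_of_mem_suppSub {X : Matrix (Fin d × Fin d) (Fin d × Fin d) ℂ}
    (hX : X ∈ suppSub d) :
    ∀ s : Fin d → ℂ, (∀ i, s i = 1 ∨ s i = -1) →
      Matrix.diagonal (fun p : Fin d × Fin d => s p.1 * s p.2) * X *
        Matrix.diagonal (fun p : Fin d × Fin d => s p.1 * s p.2) = X := by
  intro s hs
  have hsq : ∀ x, s x * s x = 1 := fun x => by rcases hs x with h | h <;> rw [h] <;> norm_num
  ext ⟨i, j⟩ ⟨k, l⟩
  rw [Matrix.mul_diagonal, Matrix.diagonal_mul]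
  by_cases hc : LCond (i,j) (k,l)
  · rcases hc with ⟨h1, h2⟩ | ⟨h1, h2⟩ | ⟨h1, h2⟩
    · have h1' : i = k := h1; have h2' : j = l := h2
      subst h1'; subst h2'
      calc s i * s j * X (i,j) (i,j) * (s i * s j)
          = (s i * s i) * ((s j * s j) * X (i,j) (i,j)) := by ring
        _ = X (i,j) (i,j) := by rw [hsq, hsq]; ring
    · have h1' : i = j := h1; have h2' : k = l := h2
      subst h1'; subst h2'
      calc s i * s i * X (i,i) (k,k) * (s k * s k)
          = (s i * s i) * ((s k * s k) * X (i,i) (k,k)) := by ring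
        _ = X (i,i) (k,k) := by rw [hsq, hsq]; ring
    · have h1' : i = l := h1; have h2' : j = k := h2
      subst h1'; subst h2'
      calc s i * s j * X (i,j) (j,i) * (s j * s i)
          = (s i * s i) * ((s j * s j) * X (i,j) (j,i)) := by ring
        _ = X (i,j) (j,i) := by rw [hsq, hsq]; ring
  · rw [hX _ _ hc]; ring

/-- The allowed-support index set. -/
def TSet (d : ℕ) : Finset ((Fin d × Fin d) × (Fin d × Fin d)) :=
  Finset.univ.filter fun x => LCond x.1 x.2

lemma card_TSet : (TSet d).card = 3 * d ^ 2 - 2 * d := by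
  classical
  set T1 : Finset ((Fin d × Fin d) × (Fin d × Fin d)) :=
    Finset.univ.image fun p : Fin d × Fin d => (p, p) with hT1
  set T2 : Finset ((Fin d × Fin d) × (Fin d × Fin d)) :=
    (Finset.univ : Finset (Fin d)).offDiag.image fun p => ((p.1, p.1), (p.2, p.2)) with hT2
  set T3 : Finset ((Fin d × Fin d) × (Fin d × Fin d)) :=
    (Finset.univ : Finset (Fin d)).offDiag.image fun p => ((p.1, p.2), (p.2, p.1)) with hT3
  have hunion : TSet d = T1 ∪ T2 ∪ T3 := by
    ext ⟨⟨i, j⟩, ⟨k, l⟩⟩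
    simp only [TSet, Finset.mem_filter, Finset.mem_univ, true_and]
    simp only [TSet, hT1, hT2, hT3, Finset.mem_filter, Finset.mem_univ, true_and,
      Finset.mem_union, Finset.mem_image, Finset.mem_offDiag, LCond, Prod.mk.injEq,
      Prod.exists]
    constructor
    · rintro (⟨h1, h2⟩ | ⟨h1, h2⟩ | ⟨h1, h2⟩)
      · exact Or.inl (Or.inl ⟨i, j, ⟨rfl, rfl⟩, h1, h2⟩)
      · have h1' : i = j := h1; have h2' : k = l := h2
        by_cases hik : i = k
        · exact Or.inl (Or.inl ⟨i, j, ⟨rfl, rfl⟩, hik, by rw [← h1', hik, h2']⟩)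
        · exact Or.inl (Or.inr ⟨i, k, hik, ⟨rfl, h1'⟩, rfl, h2'⟩)
      · have h1' : i = l := h1; have h2' : j = k := h2
        by_cases hij : i = j
        · exact Or.inl (Or.inl ⟨i, j, ⟨rfl, rfl⟩, hij.trans h2', hij.symm.trans h1'⟩)
        · exact Or.inr ⟨i, j, hij, ⟨rfl, rfl⟩, h2', h1'⟩
    · rintro ((⟨a, b, ⟨ha, hb⟩, hk, hl⟩ | ⟨a, b, hab, ⟨ha, hb⟩, hk, hl⟩) |
        ⟨a, b, hab, ⟨ha, hb⟩, hk, hl⟩)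
      · exact Or.inl ⟨ha.symm.trans hk, hb.symm.trans hl⟩
      · exact Or.inr (Or.inl ⟨ha.symm.trans hb, hk.symm.trans hl⟩)
      · exact Or.inr (Or.inr ⟨ha.symm.trans hl, hb.symm.trans hk⟩)
  have hd12 : Disjoint T1 T2 := by
    rw [Finset.disjoint_left]
    rintro ⟨⟨i, j⟩, ⟨k, l⟩⟩ h1 h2
    simp only [hT1, hT2, Finset.mem_image, Finset.mem_univ, true_and, Finset.mem_offDiag,
      Prod.mk.injEq, Prod.exists] at h1 h2
    obtain ⟨a, b, ⟨ha, hb⟩, hk, hl⟩ := h1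
    obtain ⟨c, e, hce, ⟨hc1, hc2⟩, he1, he2⟩ := h2
    exact hce (hc1.trans ((ha.symm.trans hk).trans he1.symm))
  have hd13 : Disjoint T1 T3 := by
    rw [Finset.disjoint_left]
    rintro ⟨⟨i, j⟩, ⟨k, l⟩⟩ h1 h3
    simp only [hT1, hT3, Finset.mem_image, Finset.mem_univ, true_and, Finset.mem_offDiag,
      Prod.mk.injEq, Prod.exists] at h1 h3
    obtain ⟨a, b, ⟨ha, hb⟩, hk, hl⟩ := h1
    obtain ⟨c, e, hce, ⟨hc1, hc2⟩, he1, he2⟩ := h3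
    -- hc1 : c = i, hc2 : e = j, he1 : e = k, he2 : c = l ; ha : a = i, hb : b = j,
    -- hk : a = k, hl : b = l ; so i = k, j = l and c = i, e = j with e = k, need c = e
    exact hce ((hc1.trans (ha.symm.trans hk)).trans he1.symm)
  have hd23 : Disjoint (T1 ∪ T2) T3 := by
    rw [Finset.disjoint_union_left]
    refine ⟨hd13, ?_⟩
    rw [Finset.disjoint_left]
    rintro ⟨⟨i, j⟩, ⟨k, l⟩⟩ h2 h3
    simp only [hT2, hT3, Finset.mem_image, Finset.mem_univ, true_and, Finset.mem_offDiag,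
      Prod.mk.injEq, Prod.exists] at h2 h3
    obtain ⟨a, b, hab, ⟨ha1, ha2⟩, hb1, hb2⟩ := h2
    obtain ⟨c, e, hce, ⟨hc1, hc2⟩, he1, he2⟩ := h3
    -- a = i, a = j so i = j; c = i, e = j, c ≠ e so i ≠ j
    exact hce ((hc1.trans (ha1.symm.trans ha2)).trans hc2.symm)
  have hinj1 : Function.Injective fun p : Fin d × Fin d => (p, p) :=
    fun a b h => congrArg Prod.fst h
  have hinj2 : Function.Injective
      fun p : Fin d × Fin d => (((p.1, p.1), (p.2, p.2)) : (Fin d × Fin d) × (Fin d × Fin d)) := by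
    rintro ⟨a, b⟩ ⟨c, e⟩ h
    simp only [Prod.mk.injEq] at h
    exact Prod.ext h.1.1 h.2.1
  have hinj3 : Function.Injective
      fun p : Fin d × Fin d => (((p.1, p.2), (p.2, p.1)) : (Fin d × Fin d) × (Fin d × Fin d)) := by
    rintro ⟨a, b⟩ ⟨c, e⟩ h
    simp only [Prod.mk.injEq] at h
    exact Prod.ext h.1.1 h.1.2
  have hc1 : T1.card = d * d := by
    rw [hT1, Finset.card_image_of_injective _ hinj1]
    simp [Fintype.card_prod]
  have hc2 : T2.card = d * d - d := by
    rw [hT2, Finset.card_image_of_injective _ hinj2, Finset.offDiag_card]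
    simp
  have hc3 : T3.card = d * d - d := by
    rw [hT3, Finset.card_image_of_injective _ hinj3, Finset.offDiag_card]
    simp
  rw [hunion, Finset.card_union_of_disjoint hd23, Finset.card_union_of_disjoint hd12,
    hc1, hc2, hc3]
  have hdd : d ≤ d * d := by
    cases d with
    | zero => simp
    | succ n => exact Nat.le_mul_of_pos_left _ n.succ_pos
  rw [pow_two]
  omega

end Dim

section Span
variable {d : ℕ}

noncomputable def eBasis (d : ℕ) (t : TSet d) :
    Matrix (Fin d × Fin d) (Fin d × Fin d) ℂ :=
  single t.1.1 t.1.2 1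

lemma eBasis_li : LinearIndependent ℂ (eBasis d) := by
  have h : eBasis d = (Matrix.stdBasis ℂ (Fin d × Fin d) (Fin d × Fin d)) ∘
      (Subtype.val : TSet d → (Fin d × Fin d) × (Fin d × Fin d)) := by
    funext t
    simp only [eBasis, Function.comp_apply]
    rw [show (t : (Fin d × Fin d) × (Fin d × Fin d)) = (t.1.1, t.1.2) from rfl,
      Matrix.stdBasis_eq_single]
  rw [h]
  exact (Matrix.stdBasis ℂ _ _).linearIndependent.comp _ Subtype.val_injective

lemma suppSub_eq_span : suppSub d = Submodule.span ℂ (Set.range (eBasis d)) := by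
  apply le_antisymm
  · intro X hX
    rw [matrix_eq_sum_single X]
    apply Submodule.sum_mem
    intro p _
    apply Submodule.sum_mem
    intro q _
    by_cases hc : LCond p q
    · have hx : single p q (X p q) = X p q • single p q 1 := by
        ext a b
        simp only [single, Matrix.smul_apply, Matrix.of_apply, smul_ite, smul_eq_mul,
          mul_one, mul_zero]
        split_ifs <;> simp
      rw [hx]
      exact Submodule.smul_mem _ _ (Submodule.subset_span
        ⟨⟨(p, q), by simp [TSet, hc]⟩, rfl⟩)
    · rw [hX p q hc]
      simp only [single_zero]
      exact Submodule.zero_mem _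
  · rw [Submodule.span_le]
    rintro _ ⟨t, rfl⟩ p q hpq
    have ht : LCond t.1.1 t.1.2 := by
      have := t.2
      simp only [TSet, Finset.mem_filter, Finset.mem_univ, true_and] at this
      exact this
    by_cases h1 : t.1.1 = p ∧ t.1.2 = q
    · exact absurd (h1.1 ▸ h1.2 ▸ ht) hpq
    · simp only [eBasis, single, Matrix.of_apply, if_neg h1]

lemma finrank_suppSub : Module.finrank ℂ (suppSub d) = 3 * d ^ 2 - 2 * d := by
  rw [suppSub_eq_span, finrank_span_eq_card eBasis_li, Fintype.card_coe, card_TSet]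

end Span

theorem stmt_0 (d : ℕ) :
    (∀ X : Matrix (Fin d × Fin d) (Fin d × Fin d) ℂ,
      (∀ s : Fin d → ℂ, (∀ i, s i = 1 ∨ s i = -1) →
        Matrix.diagonal (fun p : Fin d × Fin d => s p.1 * s p.2) * X *
          Matrix.diagonal (fun p : Fin d × Fin d => s p.1 * s p.2) = X) →
      ∃ A B C : Matrix (Fin d) (Fin d) ℂ, EqDiag A B C ∧ X = X3 A B C) ∧
    Module.finrank ℂ (Submodule.span ℂ
      {X : Matrix (Fin d × Fin d) (Fin d × Fin d) ℂ |
        ∀ s : Fin d → ℂ, (∀ i, s i = 1 ∨ s i = -1) →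
          Matrix.diagonal (fun p : Fin d × Fin d => s p.1 * s p.2) * X *
            Matrix.diagonal (fun p : Fin d × Fin d => s p.1 * s p.2) = X})
      = 3 * d ^ 2 - 2 * d := by
  constructor
  · intro X hX
    exact X3_of_supp (fun p q h => supp_of_inv hX h)
  · have hset : {X : Matrix (Fin d × Fin d) (Fin d × Fin d) ℂ |
        ∀ s : Fin d → ℂ, (∀ i, s i = 1 ∨ s i = -1) →
          Matrix.diagonal (fun p : Fin d × Fin d => s p.1 * s p.2) * X *
            Matrix.diagonal (fun p : Fin d × Fin d => s p.1 * s p.2) = X} =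
        (suppSub d : Set (Matrix (Fin d × Fin d) (Fin d × Fin d) ℂ)) := by
      ext X
      exact ⟨fun h => mem_suppSub_of_inv h, fun h => inv_of_mem_suppSub h⟩
    rw [hset, Submodule.span_eq, finrank_suppSub]
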